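/- arXiv:1507.01232 — 2 statements merged into one kernel-verified Lean document; each statement's English description precedes it below -/
import Mathlib

section
/- Let a > 0 and let E : ℝ → ℝ be a continuously differentiable dispersion relation that is periodic with period 2π/a, i.e. E(p + 2π/a) = E(p) for all p ∈ ℝ. Suppose E has only finitely many zeros in the fundamental domain [0, 2π/a), and every zero p satisfies E′(p) ≠ 0. Then the number of zeros p ∈ [0, 2π/a) with E′(p) > 0 equals the number of zeros with E′(p) < 0. -/
open Real Filter Set Topology

/-- If `E` is C¹, vanishes at `p < q` with no zeros in between, and has positive
derivative at `p`, then its derivative at `q` is nonpositive. -/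
lemma pos_step (E : ℝ → ℝ) (hE : ContDiff ℝ 1 E) {p q : ℝ} (hpq : p < q)
    (hp : E p = 0) (hq : E q = 0) (hno : ∀ x ∈ Set.Ioo p q, E x ≠ 0)
    (hdp : 0 < deriv E p) : deriv E q ≤ 0 := by
  have hd : ∀ x : ℝ, HasDerivAt E (deriv E x) x := fun x =>
    ((hE.differentiable one_ne_zero) x).hasDerivAt
  -- there is a point just right of p where E is positive
  have htp : Tendsto (slope E p) (𝓝[≠] p) (𝓝 (deriv E p)) :=
    hasDerivAt_iff_tendsto_slope.1 (hd p)
  have hev : ∀ᶠ y in 𝓝[≠] p, 0 < slope E p y := htp.eventually (eventually_gt_nhds hdp)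
  have hev' : ∀ᶠ y in 𝓝[>] p, 0 < slope E p y :=
    hev.filter_mono (nhdsWithin_mono p fun x hx => ne_of_gt hx)
  have hmem : Set.Ioo p q ∈ 𝓝[>] p := Ioo_mem_nhdsGT_of_mem ⟨le_rfl, hpq⟩
  obtain ⟨x, hx1, hx2⟩ := (hev'.and (eventually_mem_set.2 hmem)).exists
  have hxpos : 0 < E x := by
    have : slope E p x = E x / (x - p) := by
      simp [slope_def_field, hp]
    rw [this] at hx1
    have hxp : 0 < x - p := sub_pos.2 hx2.1
    by_contra hcon
    push_neg at hcon
    exact absurd hx1 (not_lt.2 (div_nonpos_of_nonpos_of_nonneg hcon hxp.le))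
  -- E is positive on all of Ioo p q
  have hposall : ∀ y ∈ Set.Ioo p q, 0 < E y := by
    intro y hy
    by_contra hcon
    push_neg at hcon
    have hconn : Set.uIcc x y ⊆ Set.Ioo p q :=
      Set.OrdConnected.uIcc_subset Set.ordConnected_Ioo hx2 hy
    have hcont : ContinuousOn E (Set.uIcc x y) := (hE.continuous).continuousOn
    have h0 : (0 : ℝ) ∈ Set.uIcc (E x) (E y) := Set.mem_uIcc.2 (Or.inr ⟨hcon, hxpos.le⟩)
    obtain ⟨z, hz, hz0⟩ := intermediate_value_uIcc hcont h0
    exact hno z (hconn hz) hz0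
  -- hence the derivative at q is ≤ 0
  have htq : Tendsto (slope E q) (𝓝[<] q) (𝓝 (deriv E q)) :=
    (hasDerivAt_iff_tendsto_slope.1 (hd q)).mono_left
      (nhdsWithin_mono q fun x hx => ne_of_lt hx)
  have hevq : ∀ᶠ y in 𝓝[<] q, slope E q y ≤ 0 := by
    filter_upwards [eventually_mem_set.2 (Ioo_mem_nhdsLT_of_mem ⟨hpq, le_rfl⟩)] with y hy
    have : slope E q y = E y / (y - q) := by simp [slope_def_field, hq]
    rw [this]
    exact (div_nonpos_iff.2 (Or.inl ⟨(hposall y hy).le, (sub_neg.2 hy.2).le⟩))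
  exact le_of_tendsto htq hevq

/-- At two consecutive nondegenerate zeros, the derivative has opposite signs. -/
lemma key_iff (E : ℝ → ℝ) (hE : ContDiff ℝ 1 E) {p q : ℝ} (hpq : p < q)
    (hp : E p = 0) (hq : E q = 0) (hno : ∀ x ∈ Set.Ioo p q, E x ≠ 0)
    (hdp : deriv E p ≠ 0) (hdq : deriv E q ≠ 0) :
    (0 < deriv E p ↔ deriv E q < 0) := by
  constructor
  · intro h
    exact lt_of_le_of_ne (pos_step E hE hpq hp hq hno h) hdq
  · intro h
    rcases hdp.lt_or_gt with h1 | h1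
    · exfalso
      have hE' : ContDiff ℝ 1 (-E) := hE.neg
      have hd : ∀ x : ℝ, deriv (-E) x = -deriv E x := by
        intro x
        exact deriv.neg
      have := pos_step (-E) hE' hpq (by simp [hp]) (by simp [hq])
        (fun x hx => by simpa using hno x hx) (by rw [hd]; linarith)
      rw [hd] at this
      linarith
    · exact h1


/-- **One-dimensional Nielsen–Ninomiya counting.**
A `C¹` dispersion relation `E` on a lattice with spacing `a` is periodic with period
`2π/a`.  If `E` has finitely many zeros in the fundamental domain `[0, 2π/a)`, all of
them with nonvanishing derivative, then the zeros with positive slope (right-handed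
fermions) are exactly as numerous as the zeros with negative slope (left-handed
fermions). -/
theorem upward_crossings_eq_downward_crossings
    (a : ℝ) (ha : 0 < a)
    (E : ℝ → ℝ) (hE : ContDiff ℝ 1 E)
    (hper : ∀ p : ℝ, E (p + 2 * π / a) = E p)
    (hfin : {p ∈ Set.Ico (0 : ℝ) (2 * π / a) | E p = 0}.Finite)
    (hnd : ∀ p ∈ Set.Ico (0 : ℝ) (2 * π / a), E p = 0 → deriv E p ≠ 0) :
    {p ∈ Set.Ico (0 : ℝ) (2 * π / a) | E p = 0 ∧ 0 < deriv E p}.ncard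
      = {p ∈ Set.Ico (0 : ℝ) (2 * π / a) | E p = 0 ∧ deriv E p < 0}.ncard := by
  classical
  set T : ℝ := 2 * π / a with hTdef
  have hT : 0 < T := by positivity
  -- periodicity of the derivative
  have hperD : ∀ x : ℝ, deriv E (x + T) = deriv E x := by
    intro x
    have hfun : (fun y : ℝ => E (y + T)) = E := funext hper
    calc deriv E (x + T) = deriv (fun y => E (y + T)) x :=
          (deriv_comp_add_const E T x).symm
      _ = deriv E x := by rw [hfun]
  set Z : Finset ℝ := hfin.toFinset with hZdef
  have hZmem : ∀ {p : ℝ}, p ∈ Z ↔ p ∈ Set.Ico (0:ℝ) T ∧ E p = 0 := by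
    intro p
    rw [hZdef, Set.Finite.mem_toFinset, Set.mem_sep_iff]
  -- the cyclic "next zero" function
  set nxt : ℝ → ℝ := fun p =>
    if h : (Z.filter fun q => p < q).Nonempty then (Z.filter fun q => p < q).min' h
    else if h2 : Z.Nonempty then Z.min' h2 else 0 with hnxtdef
  -- main claim: nxt maps Z to Z and flips the sign of the derivative
  have hmain : ∀ p ∈ Z, nxt p ∈ Z ∧ (0 < deriv E p ↔ deriv E (nxt p) < 0) := by
    intro p hp
    obtain ⟨hpS, hpz⟩ := hZmem.1 hp
    by_cases h : (Z.filter fun q => p < q).Nonempty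
    · -- non-wrap case
      set q : ℝ := (Z.filter fun q => p < q).min' h with hqdef
      have hnxt : nxt p = q := by simp only [hnxtdef, dif_pos h]; rfl
      have hqmem : q ∈ Z.filter fun q => p < q := Finset.min'_mem _ h
      have hqZ : q ∈ Z := (Finset.mem_filter.1 hqmem).1
      have hpq : p < q := (Finset.mem_filter.1 hqmem).2
      obtain ⟨hqS, hqz⟩ := hZmem.1 hqZ
      have hno : ∀ x ∈ Set.Ioo p q, E x ≠ 0 := by
        intro x hx hx0
        have hxS : x ∈ Set.Ico (0:ℝ) T := ⟨le_trans hpS.1 hx.1.le, lt_trans hx.2 hqS.2⟩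
        have hxZ : x ∈ Z.filter fun q => p < q :=
          Finset.mem_filter.2 ⟨hZmem.2 ⟨hxS, hx0⟩, hx.1⟩
        exact absurd (Finset.min'_le _ x hxZ) (not_le.2 hx.2)
      rw [hnxt]
      exact ⟨hqZ, key_iff E hE hpq hpz hqz hno (hnd p hpS hpz) (hnd q hqS hqz)⟩
    · -- wrap-around case
      have hZne : Z.Nonempty := ⟨p, hp⟩
      set m : ℝ := Z.min' hZne with hmdef
      have hnxt : nxt p = m := by simp only [hnxtdef, dif_neg h, dif_pos hZne]; rfl
      have hmZ : m ∈ Z := Finset.min'_mem _ hZne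
      obtain ⟨hmS, hmz⟩ := hZmem.1 hmZ
      have hpq : p < m + T := lt_of_lt_of_le hpS.2 (le_add_of_nonneg_left hmS.1)
      have hqz' : E (m + T) = 0 := by rw [hper m]; exact hmz
      have hno : ∀ x ∈ Set.Ioo p (m + T), E x ≠ 0 := by
        intro x hx hx0
        by_cases hxT : x < T
        · have hxS : x ∈ Set.Ico (0:ℝ) T := ⟨le_trans hpS.1 hx.1.le, hxT⟩
          exact h ⟨x, Finset.mem_filter.2 ⟨hZmem.2 ⟨hxS, hx0⟩, hx.1⟩⟩
        · push_neg at hxT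
          have hy0 : E (x - T) = 0 := by
            have := hper (x - T)
            rw [sub_add_cancel] at this
            rw [← this]; exact hx0
          have hym : x - T < m := by linarith [hx.2]
          have hyS : x - T ∈ Set.Ico (0:ℝ) T := ⟨by linarith, lt_trans hym hmS.2⟩
          have hyZ : x - T ∈ Z := hZmem.2 ⟨hyS, hy0⟩
          exact absurd (Finset.min'_le _ _ hyZ) (not_le.2 hym)
      have hdq : deriv E (m + T) ≠ 0 := by rw [hperD m]; exact hnd m hmS hmz
      have hiff := key_iff E hE hpq hpz hqz' hno (hnd p hpS hpz) hdq
      rw [hperD m] at hiff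
      rw [hnxt]
      exact ⟨hmZ, hiff⟩
  -- nxt is injective on Z
  have hinj' : ∀ p₁ ∈ Z, ∀ p₂ ∈ Z, p₁ < p₂ → nxt p₁ ≠ nxt p₂ := by
    intro p₁ h1 p₂ h2 hlt heq
    have hfne : (Z.filter fun q => p₁ < q).Nonempty :=
      ⟨p₂, Finset.mem_filter.2 ⟨h2, hlt⟩⟩
    have e1 : nxt p₁ = (Z.filter fun q => p₁ < q).min' hfne := by
      simp only [hnxtdef, dif_pos hfne]
    have hle : nxt p₁ ≤ p₂ := by
      rw [e1]; exact Finset.min'_le _ _ (Finset.mem_filter.2 ⟨h2, hlt⟩)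
    have hgt : p₁ < nxt p₁ := by
      rw [e1]; exact (Finset.mem_filter.1 (Finset.min'_mem _ hfne)).2
    by_cases h2f : (Z.filter fun q => p₂ < q).Nonempty
    · have e2 : nxt p₂ = (Z.filter fun q => p₂ < q).min' h2f := by
        rw [hnxtdef]; exact dif_pos h2f
      have : p₂ < nxt p₂ := by
        rw [e2]; exact (Finset.mem_filter.1 (Finset.min'_mem _ h2f)).2
      rw [← heq] at this
      linarith
    · have hZne : Z.Nonempty := ⟨p₁, h1⟩
      have e2 : nxt p₂ = Z.min' hZne := by simp only [hnxtdef, dif_neg h2f, dif_pos hZne]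
      have : nxt p₂ ≤ p₁ := by rw [e2]; exact Finset.min'_le Z p₁ h1
      rw [← heq] at this
      linarith
  have hinj : Set.InjOn nxt ↑Z := by
    intro p₁ h1 p₂ h2 heq
    by_contra hne
    rcases lt_or_gt_of_ne hne with hlt | hgt
    · exact hinj' p₁ h1 p₂ h2 hlt heq
    · exact hinj' p₂ h2 p₁ h1 hgt heq.symm
  -- the two sets
  set P : Set ℝ := {p ∈ Set.Ico (0:ℝ) T | E p = 0 ∧ 0 < deriv E p} with hPdef
  set N : Set ℝ := {p ∈ Set.Ico (0:ℝ) T | E p = 0 ∧ deriv E p < 0} with hNdef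
  have hPZ : ∀ p ∈ P, p ∈ Z := fun p hp => hZmem.2 ⟨hp.1, hp.2.1⟩
  have hNZ : ∀ p ∈ N, p ∈ Z := fun p hp => hZmem.2 ⟨hp.1, hp.2.1⟩
  have hPfin : P.Finite := hfin.subset fun x hx => ⟨hx.1, hx.2.1⟩
  have hNfin : N.Finite := hfin.subset fun x hx => ⟨hx.1, hx.2.1⟩
  have himgP : nxt '' P ⊆ N := by
    rintro _ ⟨p, hp, rfl⟩
    obtain ⟨hnZ, hiff⟩ := hmain p (hPZ p hp)
    obtain ⟨hnS, hnz⟩ := hZmem.1 hnZ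
    exact ⟨hnS, hnz, hiff.1 hp.2.2⟩
  have himgN : nxt '' N ⊆ P := by
    rintro _ ⟨p, hp, rfl⟩
    obtain ⟨hnZ, hiff⟩ := hmain p (hNZ p hp)
    obtain ⟨hnS, hnz⟩ := hZmem.1 hnZ
    have hne : deriv E (nxt p) ≠ 0 := hnd (nxt p) hnS hnz
    have : ¬ deriv E (nxt p) < 0 := fun hcon => absurd (hiff.2 hcon) (by linarith [hp.2.2])
    exact ⟨hnS, hnz, lt_of_le_of_ne (not_lt.1 this) (Ne.symm hne)⟩
  have h1 : P.ncard ≤ N.ncard := by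
    calc P.ncard = (nxt '' P).ncard :=
          (Set.ncard_image_of_injOn (hinj.mono fun p hp => hPZ p hp)).symm
      _ ≤ N.ncard := Set.ncard_le_ncard himgP hNfin
  have h2 : N.ncard ≤ P.ncard := by
    calc N.ncard = (nxt '' N).ncard :=
          (Set.ncard_image_of_injOn (hinj.mono fun p hp => hNZ p hp)).symm
      _ ≤ P.ncard := Set.ncard_le_ncard himgN hPfin
  exact le_antisymm h1 h2
end

section
/- Let n ≥ 1 and let A and B be Hermitian n×n complex matrices. For a Hermitian matrix M, let λ₁(M) ≤ λ₂(M) ≤ … ≤ λ_n(M) denote its eigenvalues listed in increasing order, counted with multiplicity. Then for every i ∈ {1, …, n}, |λᵢ(A) − λᵢ(B)| ≤ ‖A − B‖, where ‖·‖ denotes the operator norm induced by the Euclidean norm on ℂⁿ. In particular, each sorted eigenvalue λᵢ is a continuous function of the Hermitian matrix. -/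
open Polynomial in
lemma my_charpoly_conj {n : ℕ} (U V D : Matrix (Fin n) (Fin n) ℂ)
    (hUV : U * V = 1) (hVU : V * U = 1) :
    (U * D * V).charpoly = D.charpoly := by
  have hC : ∀ M N : Matrix (Fin n) (Fin n) ℂ,
      (M * N).map (C : ℂ →+* ℂ[X]) = M.map C * N.map C := fun M N => Matrix.map_mul
  have key : Matrix.charmatrix (U * D * V) = U.map C * Matrix.charmatrix D * V.map C := by
    rw [Matrix.charmatrix, Matrix.charmatrix]
    rw [show ((C : ℂ →+* ℂ[X]).mapMatrix (U * D * V))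
        = U.map C * D.map C * V.map C by simp [RingHom.mapMatrix_apply, hC]]
    rw [Matrix.mul_sub, Matrix.sub_mul]
    congr 1
    have h1 : (Matrix.scalar (Fin n) (X : ℂ[X])) = (X : ℂ[X]) • (1 : Matrix (Fin n) (Fin n) ℂ[X]) := by
      simp [Matrix.smul_one_eq_diagonal, Matrix.scalar]
    rw [h1, Matrix.mul_smul, Matrix.mul_one, Matrix.smul_mul, ← hC, hUV]
    simp
  rw [Matrix.charpoly, key, Matrix.det_mul, Matrix.det_mul, mul_comm, ← mul_assoc,
    ← Matrix.det_mul, ← hC, hVU]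
  simp [Matrix.charpoly]

open Polynomial in
lemma my_charpoly_hermitian {n : ℕ} {A : Matrix (Fin n) (Fin n) ℂ} (hA : A.IsHermitian) :
    A.charpoly = ∏ i, (X - C ((hA.eigenvalues i : ℝ) : ℂ)) := by
  have h := hA.spectral_theorem
  have hu : (hA.eigenvectorUnitary : Matrix (Fin n) (Fin n) ℂ) *
      (star hA.eigenvectorUnitary : Matrix (Fin n) (Fin n) ℂ) = 1 := by
    simpa using hA.eigenvectorUnitary.2.2
  have hu' : (star hA.eigenvectorUnitary : Matrix (Fin n) (Fin n) ℂ) *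
      (hA.eigenvectorUnitary : Matrix (Fin n) (Fin n) ℂ) = 1 := by
    simpa using hA.eigenvectorUnitary.2.1
  calc A.charpoly
      = ((hA.eigenvectorUnitary : Matrix (Fin n) (Fin n) ℂ) *
          Matrix.diagonal (RCLike.ofReal ∘ hA.eigenvalues) *
          (star hA.eigenvectorUnitary : Matrix (Fin n) (Fin n) ℂ)).charpoly := by
          conv_lhs => rw [h, Unitary.conjStarAlgAut_apply]
    _ = (Matrix.diagonal (RCLike.ofReal ∘ hA.eigenvalues)).charpoly :=
        my_charpoly_conj _ _ _ hu hu'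
    _ = ∏ i, (X - C ((hA.eigenvalues i : ℝ) : ℂ)) := by
        rw [Matrix.charpoly_of_upperTriangular _ (Matrix.blockTriangular_diagonal _)]
        simp [Matrix.diagonal]

open Polynomial in
lemma my_multiset_eq {n : ℕ} (f g : Fin n → ℝ)
    (h : ∏ i, (X - C ((f i : ℝ) : ℂ)) = ∏ i, (X - C ((g i : ℝ) : ℂ))) :
    Multiset.map f Finset.univ.val = Multiset.map g Finset.univ.val := by
  have hf : (∏ i, (X - C ((f i : ℝ) : ℂ))).roots
      = Multiset.map (fun i => ((f i : ℝ) : ℂ)) Finset.univ.val := by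
    rw [show (∏ i, (X - C ((f i : ℝ) : ℂ)))
        = ((Multiset.map (fun i => ((f i : ℝ) : ℂ)) Finset.univ.val).map
            (fun a => X - C a)).prod by
      rw [Multiset.map_map]; rfl]
    exact roots_multiset_prod_X_sub_C _
  have hg : (∏ i, (X - C ((g i : ℝ) : ℂ))).roots
      = Multiset.map (fun i => ((g i : ℝ) : ℂ)) Finset.univ.val := by
    rw [show (∏ i, (X - C ((g i : ℝ) : ℂ)))
        = ((Multiset.map (fun i => ((g i : ℝ) : ℂ)) Finset.univ.val).map
            (fun a => X - C a)).prod by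
      rw [Multiset.map_map]; rfl]
    exact roots_multiset_prod_X_sub_C _
  have := hf.symm.trans (h ▸ hg)
  have h2 : Multiset.map (Complex.ofReal ∘ f) Finset.univ.val
      = Multiset.map (Complex.ofReal ∘ g) Finset.univ.val := by
    simpa [Multiset.map_map] using this
  rw [← Multiset.map_map Complex.ofReal f, ← Multiset.map_map Complex.ofReal g] at h2
  exact Multiset.map_injective Complex.ofReal_injective h2

lemma my_count_eq {n : ℕ} (f g : Fin n → ℝ)
    (h : Multiset.map f Finset.univ.val = Multiset.map g Finset.univ.val)
    (p : ℝ → Prop) [DecidablePred p] :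
    (Finset.univ.filter (fun i => p (f i))).card
      = (Finset.univ.filter (fun i => p (g i))).card := by
  have : (Multiset.map f Finset.univ.val).countP p
      = (Multiset.map g Finset.univ.val).countP p := by rw [h]
  rw [Multiset.countP_map, Multiset.countP_map] at this
  simp only [Finset.card_filter]
  rw [← Finset.card_filter, ← Finset.card_filter]
  exact this

noncomputable abbrev myE (n : ℕ) := EuclideanSpace ℂ (Fin n)

lemma my_T_eigen {n : ℕ} {C : Matrix (Fin n) (Fin n) ℂ} (hC : C.IsHermitian) (j : Fin n) :
    Matrix.toEuclideanCLM (𝕜 := ℂ) C (hC.eigenvectorBasis j)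
      = ((hC.eigenvalues j : ℝ) : ℂ) • hC.eigenvectorBasis j := by
  have h := hC.mulVec_eigenvectorBasis j
  apply (WithLp.equiv 2 _).injective
  show WithLp.ofLp (Matrix.toEuclideanCLM (𝕜 := ℂ) C (hC.eigenvectorBasis j))
    = WithLp.ofLp (((hC.eigenvalues j : ℝ) : ℂ) • hC.eigenvectorBasis j)
  rw [Matrix.ofLp_toEuclideanCLM]
  ext i
  have := congrFun h i
  simpa using this

lemma my_rayleigh {n : ℕ} (b : OrthonormalBasis (Fin n) ℂ (myE n))
    (T : myE n →L[ℂ] myE n) (f : Fin n → ℝ)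
    (hT : ∀ j, T (b j) = ((f j : ℝ) : ℂ) • b j) (x : myE n) :
    (inner ℂ x (T x) : ℂ).re = ∑ j, f j * Complex.normSq (b.repr x j) := by
  have hx : T x = ∑ j, (b.repr x j * (f j : ℂ)) • b j := by
    conv_lhs => rw [← b.sum_repr x]
    rw [map_sum]
    congr 1; ext j
    rw [map_smul, hT j, smul_smul]
  rw [hx, inner_sum]
  have : ∀ j, (inner ℂ x ((b.repr x j * (f j : ℂ)) • b j) : ℂ)
      = ((f j * Complex.normSq (b.repr x j) : ℝ) : ℂ) := by
    intro j
    rw [inner_smul_right]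
    have h1 : (inner ℂ x (b j) : ℂ) = (starRingEnd ℂ) (b.repr x j) := by
      rw [← inner_conj_symm, b.repr_apply_apply]
    rw [h1]
    rw [mul_comm (b.repr x j) _, mul_assoc, Complex.mul_conj]
    push_cast
    ring
  rw [Finset.sum_congr rfl (fun j _ => this j)]
  rw [← Complex.ofReal_sum]
  simp

lemma my_parseval {n : ℕ} (b : OrthonormalBasis (Fin n) ℂ (myE n)) (x : myE n) :
    ‖x‖ ^ 2 = ∑ j, Complex.normSq (b.repr x j) := by
  have := my_rayleigh b (ContinuousLinearMap.id ℂ (myE n)) (fun _ => 1) (by simp) x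
  simp only [ContinuousLinearMap.id_apply, one_mul] at this
  rw [← this, ← inner_self_eq_norm_sq (𝕜 := ℂ) x]
  rfl

lemma my_repr_zero {n : ℕ} (b : OrthonormalBasis (Fin n) ℂ (myE n)) (s : Finset (Fin n))
    {x : myE n} (hx : x ∈ Submodule.span ℂ (b '' ↑s)) {j : Fin n} (hj : j ∉ s) :
    b.repr x j = 0 := by
  induction hx using Submodule.span_induction with
  | mem y hy =>
    obtain ⟨i, hi, rfl⟩ := hy
    rw [b.repr_self]
    simp only [EuclideanSpace.single_apply]
    rw [if_neg]
    rintro rfl; exact hj hi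
  | zero => simp
  | add y z _ _ hy hz => rw [map_add]; simp [hy, hz]
  | smul c y _ hy => rw [map_smul]; simp [hy]

lemma my_finrank_span {n : ℕ} (b : OrthonormalBasis (Fin n) ℂ (myE n)) (s : Finset (Fin n)) :
    Module.finrank ℂ (Submodule.span ℂ (b '' ↑s)) = s.card := by
  have hli : LinearIndependent ℂ (fun i : ↥s => b ↑i) :=
    b.orthonormal.linearIndependent.comp Subtype.val Subtype.val_injective
  have h1 : Set.range (fun i : ↥s => b ↑i) = b '' ↑s := by
    rw [show (fun i : ↥s => b ↑i) = b ∘ (Subtype.val : ↥s → Fin n) from rfl, Set.range_comp,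
      Subtype.range_val]
  have := finrank_span_eq_card hli
  rw [h1] at this
  rw [this, Fintype.card_coe]

lemma my_exists_inter {n : ℕ} (U V : Submodule ℂ (myE n))
    (h : n < Module.finrank ℂ U + Module.finrank ℂ V) :
    ∃ x : myE n, x ∈ U ∧ x ∈ V ∧ x ≠ 0 := by
  have hd := Submodule.finrank_sup_add_finrank_inf_eq U V
  have hle : Module.finrank ℂ ↥(U ⊔ V) ≤ n := by
    have := Submodule.finrank_le (U ⊔ V)
    simpa using this
  have hpos : 0 < Module.finrank ℂ ↥(U ⊓ V) := by omega
  have : U ⊓ V ≠ ⊥ := by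
    intro hbot
    rw [hbot] at hpos
    simp at hpos
  obtain ⟨x, hx, hx0⟩ := Submodule.exists_mem_ne_zero_of_ne_bot this
  exact ⟨x, hx.1, hx.2, hx0⟩

lemma my_key {n : ℕ} (A B : Matrix (Fin n) (Fin n) ℂ)
    (hA : A.IsHermitian) (hB : B.IsHermitian)
    (μ ν : Fin n → ℝ)
    (hμmono : Monotone μ) (hνmono : Monotone ν)
    (hμ : A.charpoly = ∏ i, (Polynomial.X - Polynomial.C ((μ i : ℝ) : ℂ)))
    (hν : B.charpoly = ∏ i, (Polynomial.X - Polynomial.C ((ν i : ℝ) : ℂ)))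
    (i : Fin n) :
    μ i ≤ ν i + ‖Matrix.toEuclideanCLM (𝕜 := ℂ) (A - B)‖ := by
  classical
  have mA : Multiset.map μ Finset.univ.val = Multiset.map hA.eigenvalues Finset.univ.val :=
    my_multiset_eq _ _ (hμ.symm.trans (my_charpoly_hermitian hA))
  have mB : Multiset.map ν Finset.univ.val = Multiset.map hB.eigenvalues Finset.univ.val :=
    my_multiset_eq _ _ (hν.symm.trans (my_charpoly_hermitian hB))
  set sA : Finset (Fin n) := Finset.univ.filter (fun j => μ i ≤ hA.eigenvalues j) with hsA
  set sB : Finset (Fin n) := Finset.univ.filter (fun j => hB.eigenvalues j ≤ ν i) with hsB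
  have hcardA : n - i.1 ≤ sA.card := by
    have h1 : (Finset.univ.filter (fun j => μ i ≤ hA.eigenvalues j)).card
        = (Finset.univ.filter (fun j => μ i ≤ μ j)).card :=
      (my_count_eq μ hA.eigenvalues mA (fun t => μ i ≤ t)).symm
    have h2 : Finset.Ici i ⊆ Finset.univ.filter (fun j => μ i ≤ μ j) := by
      intro j hj
      simp only [Finset.mem_filter, Finset.mem_univ, true_and]
      exact hμmono (Finset.mem_Ici.mp hj)
    calc n - i.1 = (Finset.Ici i).card := (Fin.card_Ici i).symm
      _ ≤ (Finset.univ.filter (fun j => μ i ≤ μ j)).card := Finset.card_le_card h2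
      _ = sA.card := h1.symm
  have hcardB : i.1 + 1 ≤ sB.card := by
    have h1 : (Finset.univ.filter (fun j => hB.eigenvalues j ≤ ν i)).card
        = (Finset.univ.filter (fun j => ν j ≤ ν i)).card :=
      (my_count_eq ν hB.eigenvalues mB (fun t => t ≤ ν i)).symm
    have h2 : Finset.Iic i ⊆ Finset.univ.filter (fun j => ν j ≤ ν i) := by
      intro j hj
      simp only [Finset.mem_filter, Finset.mem_univ, true_and]
      exact hνmono (Finset.mem_Iic.mp hj)
    calc i.1 + 1 = (Finset.Iic i).card := (Fin.card_Iic i).symm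
      _ ≤ (Finset.univ.filter (fun j => ν j ≤ ν i)).card := Finset.card_le_card h2
      _ = sB.card := h1.symm
  set bA := hA.eigenvectorBasis with hbA
  set bB := hB.eigenvectorBasis with hbB
  obtain ⟨x, hxU, hxV, hx0⟩ := my_exists_inter (Submodule.span ℂ (bA '' ↑sA))
      (Submodule.span ℂ (bB '' ↑sB)) (by
    rw [my_finrank_span, my_finrank_span]
    have := i.2
    omega)
  set TA := Matrix.toEuclideanCLM (𝕜 := ℂ) A with hTA
  set TB := Matrix.toEuclideanCLM (𝕜 := ℂ) B with hTB
  have hray_A : (inner ℂ x (TA x) : ℂ).re = ∑ j, hA.eigenvalues j * Complex.normSq (bA.repr x j) :=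
    my_rayleigh bA TA hA.eigenvalues (fun j => my_T_eigen hA j) x
  have hray_B : (inner ℂ x (TB x) : ℂ).re = ∑ j, hB.eigenvalues j * Complex.normSq (bB.repr x j) :=
    my_rayleigh bB TB hB.eigenvalues (fun j => my_T_eigen hB j) x
  have hnormx : 0 < ‖x‖ ^ 2 := pow_pos (norm_pos_iff.mpr hx0) 2
  -- lower bound for A
  have hlow : μ i * ‖x‖ ^ 2 ≤ (inner ℂ x (TA x) : ℂ).re := by
    rw [hray_A, my_parseval bA x, Finset.mul_sum]
    apply Finset.sum_le_sum
    intro j _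
    by_cases hj : j ∈ sA
    · have : μ i ≤ hA.eigenvalues j := (Finset.mem_filter.mp hj).2
      have h0 : (0:ℝ) ≤ Complex.normSq (bA.repr x j) := Complex.normSq_nonneg _
      nlinarith
    · rw [my_repr_zero bA sA hxU hj]
      simp
  have hhigh : (inner ℂ x (TB x) : ℂ).re ≤ ν i * ‖x‖ ^ 2 := by
    rw [hray_B, my_parseval bB x, Finset.mul_sum]
    apply Finset.sum_le_sum
    intro j _
    by_cases hj : j ∈ sB
    · have : hB.eigenvalues j ≤ ν i := (Finset.mem_filter.mp hj).2
      have h0 : (0:ℝ) ≤ Complex.normSq (bB.repr x j) := Complex.normSq_nonneg _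
      nlinarith
    · rw [my_repr_zero bB sB hxV hj]
      simp
  -- perturbation bound
  set T := Matrix.toEuclideanCLM (𝕜 := ℂ) (A - B) with hT
  have hTsub : T = TA - TB := by rw [hTA, hTB, hT, map_sub]
  have hpert : (inner ℂ x (TA x) : ℂ).re - (inner ℂ x (TB x) : ℂ).re ≤ ‖T‖ * ‖x‖ ^ 2 := by
    have h1 : (inner ℂ x (TA x) : ℂ) - (inner ℂ x (TB x) : ℂ) = inner ℂ x (T x) := by
      rw [hTsub]
      simp [inner_sub_right]
    have h2 : ((inner ℂ x (T x) : ℂ)).re ≤ ‖(inner ℂ x (T x) : ℂ)‖ :=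
      Complex.re_le_norm _
    have h3 : ‖(inner ℂ x (T x) : ℂ)‖ ≤ ‖x‖ * ‖T x‖ := norm_inner_le_norm x (T x)
    have h4 : ‖T x‖ ≤ ‖T‖ * ‖x‖ := T.le_opNorm x
    have h5 : ‖x‖ * ‖T x‖ ≤ ‖T‖ * ‖x‖ ^ 2 := by nlinarith [norm_nonneg x]
    calc (inner ℂ x (TA x) : ℂ).re - (inner ℂ x (TB x) : ℂ).re
        = ((inner ℂ x (TA x) : ℂ) - (inner ℂ x (TB x) : ℂ)).re := by simp
      _ = ((inner ℂ x (T x) : ℂ)).re := by rw [h1]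
      _ ≤ ‖T‖ * ‖x‖ ^ 2 := le_trans h2 (le_trans h3 h5)
  have : μ i * ‖x‖ ^ 2 ≤ (ν i + ‖T‖) * ‖x‖ ^ 2 := by nlinarith
  exact le_of_mul_le_mul_right (by linarith) hnormx

/-- **Weyl's eigenvalue perturbation inequality.**
Let `A`, `B` be Hermitian `n×n` complex matrices and let `μ`, `ν` be their respective
eigenvalues listed in increasing order with multiplicity (so that the characteristic
polynomials factor as `∏ i (X − μ i)` and `∏ i (X − ν i)`).  Then each sorted eigenvalue
moves by at most the operator norm of `A − B` (the norm induced by the Euclidean norm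
on `ℂⁿ`); in particular, each sorted eigenvalue is a continuous function of the
Hermitian matrix. -/
theorem weyl_eigenvalue_perturbation
    (n : ℕ) (hn : 1 ≤ n)
    (A B : Matrix (Fin n) (Fin n) ℂ)
    (hA : A.IsHermitian) (hB : B.IsHermitian)
    (μ ν : Fin n → ℝ)
    (hμmono : Monotone μ) (hνmono : Monotone ν)
    (hμ : A.charpoly = ∏ i, (Polynomial.X - Polynomial.C ((μ i : ℝ) : ℂ)))
    (hν : B.charpoly = ∏ i, (Polynomial.X - Polynomial.C ((ν i : ℝ) : ℂ))) :
    ∀ i : Fin n, |μ i - ν i| ≤ ‖Matrix.toEuclideanCLM (𝕜 := ℂ) (A - B)‖ := by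
  intro i
  have h1 := my_key A B hA hB μ ν hμmono hνmono hμ hν i
  have h2 := my_key B A hB hA ν μ hνmono hμmono hν hμ i
  have hnorm : ‖Matrix.toEuclideanCLM (𝕜 := ℂ) (B - A)‖
      = ‖Matrix.toEuclideanCLM (𝕜 := ℂ) (A - B)‖ := by
    rw [show B - A = -(A - B) by abel, map_neg, norm_neg]
  rw [hnorm] at h2
  rw [abs_sub_le_iff]
  constructor <;> linarith
end
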